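/- The function K2(s) - 1/3 = 4/s^2 - 2·coth(s/2)/s is even and strictly negative for all real s ≠ 0. -/

import Mathlib

noncomputable def K2third (s : ℝ) : ℝ :=
  4 / s ^ 2 - 2 * (Real.cosh (s/2) / Real.sinh (s/2)) / s

lemma sinh_lt_mul_cosh {x : ℝ} (hx : 0 < x) : Real.sinh x < x * Real.cosh x := by
  have h : StrictMonoOn (fun y : ℝ => y * Real.cosh y - Real.sinh y) (Set.Ici 0) := by
    apply strictMonoOn_of_deriv_pos (convex_Ici 0)
    · fun_prop
    · intro y hy
      rw [interior_Ici, Set.mem_Ioi] at hy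
      have hd : HasDerivAt (fun y : ℝ => y * Real.cosh y - Real.sinh y)
          (1 * Real.cosh y + y * Real.sinh y - Real.cosh y) y :=
        ((hasDerivAt_id y).mul (Real.hasDerivAt_cosh y)).sub (Real.hasDerivAt_sinh y)
      rw [hd.deriv]
      have := Real.sinh_pos_iff.2 hy
      nlinarith
  have := h Set.self_mem_Ici (Set.mem_Ici.2 hx.le) hx
  simpa using this

lemma K2third_neg_of_pos {s : ℝ} (hs : 0 < s) : K2third s < 0 := by
  have hx : 0 < s / 2 := by linarith
  have hsinh : 0 < Real.sinh (s / 2) := Real.sinh_pos_iff.2 hx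
  have hkey := sinh_lt_mul_cosh hx
  have heq : K2third s =
      (4 * Real.sinh (s/2) - 2 * s * Real.cosh (s/2)) / (s ^ 2 * Real.sinh (s/2)) := by
    unfold K2third
    field_simp
  rw [heq]
  apply div_neg_of_neg_of_pos
  · nlinarith
  · positivity

theorem stmt_3 :
    (∀ s : ℝ, s ≠ 0 → K2third (-s) = K2third s) ∧
    (∀ s : ℝ, s ≠ 0 → K2third s < 0) := by
  have heven : ∀ s : ℝ, K2third (-s) = K2third s := by
    intro s
    unfold K2third
    rw [show -s / 2 = -(s/2) by ring, Real.cosh_neg, Real.sinh_neg]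
    rw [neg_pow]
    field_simp
  refine ⟨fun s _ => heven s, fun s hs => ?_⟩
  rcases lt_or_gt_of_ne hs with h | h
  · rw [← heven]
    exact K2third_neg_of_pos (by linarith)
  · exact K2third_neg_of_pos h
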